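/- Let V and Q be monic complex polynomials with no common roots and with deg Q − deg V = k ≥ 2, and let μ be a compactly supported probability measure on ℂ whose Cauchy transform satisfies C_μ(z)^k = V(z)/Q(z) for Lebesgue-almost every z ∈ ℂ. Suppose a ∈ ℂ is a root of Q of multiplicity exactly k, and write Q(z) = (z − a)^k·W(z) with W(a) ≠ 0. Then the mass m = μ({a}) is strictly positive and satisfies m^k = V(a)/W(a); in particular V(a)/W(a) is a positive real number and μ({a}) = |V(a)/W(a)|^{1/k}. -/

import Mathlib

open Polynomial MeasureTheory

/-- The Cauchy transform of a measure on `ℂ`. -/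
noncomputable def cauchyTransform (μ : Measure ℂ) (z : ℂ) : ℂ := ∫ ζ, (z - ζ)⁻¹ ∂μ

open Metric ENNReal

lemma vol_ball_C (c : ℂ) (r : ℝ) (hr : 0 ≤ r) :
    volume (Metric.ball c r) = ENNReal.ofReal (r ^ 2 * Real.pi) := by
  rw [Complex.volume_ball, ← ENNReal.ofReal_pow hr, ENNReal.ofReal_mul (by positivity),
    ← NNReal.coe_real_pi, ENNReal.ofReal_coe_nnreal]

lemma lint_inv_ball_center (c : ℂ) (r : ℝ) :
    ∫⁻ z in Metric.ball c r, (‖z - c‖₊ : ℝ≥0∞)⁻¹ ≤ ENNReal.ofReal (4 * Real.pi * r) := by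
  rcases le_or_gt r 0 with hr | hr
  · rw [Metric.ball_eq_empty.2 hr]
    simp
  set f : ℂ → ℝ≥0∞ := fun z => (‖z - c‖₊ : ℝ≥0∞)⁻¹ with hf
  set S : ℕ → Set ℂ := fun n => Metric.ball c (r / 2 ^ n) \ Metric.ball c (r / 2 ^ (n + 1)) with hS
  have hsub : Metric.ball c r \ {c} ⊆ ⋃ n, S n := by
    intro z hz
    obtain ⟨hzb, hzc⟩ := hz
    have hz0 : 0 < ‖z - c‖ := by
      rw [norm_pos_iff, sub_ne_zero]
      exact hzc
    have hzr : ‖z - c‖ < r := by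
      rw [Metric.mem_ball, Complex.dist_eq] at hzb
      exact hzb
    have hex : ∃ N : ℕ, r / 2 ^ N ≤ ‖z - c‖ := by
      obtain ⟨N, hN⟩ := pow_unbounded_of_one_lt (r / ‖z - c‖) (y := (2:ℝ)) one_lt_two
      refine ⟨N, ?_⟩
      rw [div_le_iff₀ (by positivity)]
      rw [div_lt_iff₀ hz0] at hN
      nlinarith
    have hN0 : Nat.find hex ≠ 0 := by
      intro h0
      have := Nat.find_spec hex
      rw [h0, pow_zero, div_one] at this
      linarith
    refine Set.mem_iUnion.2 ⟨Nat.find hex - 1, ?_, ?_⟩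
    · have := Nat.find_min hex (m := Nat.find hex - 1) (Nat.pred_lt hN0)
      push_neg at this
      rw [Metric.mem_ball, Complex.dist_eq]
      exact this
    · intro hmem
      rw [Metric.mem_ball, Complex.dist_eq] at hmem
      have heq : Nat.find hex - 1 + 1 = Nat.find hex := Nat.succ_pred_eq_of_ne_zero hN0
      rw [heq] at hmem
      exact absurd (Nat.find_spec hex) (not_le.2 hmem)
  have hmeas0 : (volume : Measure ℂ) {c} = 0 := measure_singleton c
  have hae : (Metric.ball c r : Set ℂ) =ᵐ[volume] ((Metric.ball c r \ {c} : Set ℂ)) := by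
    refine (MeasureTheory.ae_eq_set).2 ⟨?_, ?_⟩
    · rw [Set.diff_diff_right_self]
      exact measure_mono_null Set.inter_subset_right hmeas0
    · exact measure_mono_null (fun x hx => absurd hx.1.1 hx.2) hmeas0
  calc ∫⁻ z in Metric.ball c r, f z = ∫⁻ z in Metric.ball c r \ {c}, f z :=
        setLIntegral_congr hae
    _ ≤ ∫⁻ z in ⋃ n, S n, f z := lintegral_mono_set hsub
    _ ≤ ∑' n, ∫⁻ z in S n, f z := lintegral_iUnion_le _ _
    _ ≤ ∑' n, ENNReal.ofReal (2 * Real.pi * r * (1 / 2) ^ n) := by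
        refine ENNReal.tsum_le_tsum fun n => ?_
        have hb : ∀ z ∈ S n, f z ≤ ENNReal.ofReal (2 ^ (n + 1) / r) := by
          intro z hz
          have h1 : r / 2 ^ (n + 1) ≤ ‖z - c‖ := by
            have := hz.2
            rw [Metric.mem_ball, Complex.dist_eq, not_lt] at this
            exact this
          have : ENNReal.ofReal (r / 2 ^ (n + 1)) ≤ (‖z - c‖₊ : ℝ≥0∞) := by
            rw [← enorm_eq_nnnorm, ← ofReal_norm]
            exact ENNReal.ofReal_le_ofReal h1
          calc f z ≤ (ENNReal.ofReal (r / 2 ^ (n + 1)))⁻¹ := ENNReal.inv_le_inv' this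
            _ = ENNReal.ofReal ((r / 2 ^ (n + 1))⁻¹) :=
                (ENNReal.ofReal_inv_of_pos (by positivity)).symm
            _ = ENNReal.ofReal (2 ^ (n + 1) / r) := by rw [inv_div]
        calc ∫⁻ z in S n, f z ≤ ∫⁻ _ in S n, ENNReal.ofReal (2 ^ (n + 1) / r) :=
              setLIntegral_mono' (measurableSet_ball.diff measurableSet_ball) hb
          _ = ENNReal.ofReal (2 ^ (n + 1) / r) * volume (S n) := setLIntegral_const _ _
          _ ≤ ENNReal.ofReal (2 ^ (n + 1) / r) * ENNReal.ofReal ((r / 2 ^ n) ^ 2 * Real.pi) := by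
              gcongr
              rw [← vol_ball_C c (r / 2 ^ n) (by positivity)]
              exact measure_mono Set.diff_subset
          _ = ENNReal.ofReal (2 * Real.pi * r * (1 / 2) ^ n) := by
              rw [← ENNReal.ofReal_mul (by positivity)]
              congr 1
              field_simp
              have h2 : (2:ℝ) ^ n * (1 / 2) ^ n = 1 := by rw [← mul_pow]; norm_num
              linear_combination (-(2:ℝ) ^ n * 2) * h2
    _ = ENNReal.ofReal (2 * Real.pi * r) * ∑' n : ℕ, ((2 : ℝ≥0∞)⁻¹) ^ n := by
        rw [← ENNReal.tsum_mul_left]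
        congr 1
        ext n
        rw [ENNReal.ofReal_mul (by positivity), ENNReal.ofReal_pow (by norm_num)]
        congr 2
        rw [show (1 / 2 : ℝ) = (2 : ℝ)⁻¹ by norm_num,
          ENNReal.ofReal_inv_of_pos (by norm_num), ENNReal.ofReal_ofNat]
    _ = ENNReal.ofReal (2 * Real.pi * r) * 2 := by
        rw [ENNReal.tsum_geometric, ENNReal.one_sub_inv_two, inv_inv]
    _ = ENNReal.ofReal (4 * Real.pi * r) := by
        rw [show (2 : ℝ≥0∞) = ENNReal.ofReal 2 by simp, ← ENNReal.ofReal_mul (by positivity)]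
        congr 1
        ring

lemma lint_inv_ball (c ζ : ℂ) (r : ℝ) :
    ∫⁻ z in Metric.ball c r, (‖z - ζ‖₊ : ℝ≥0∞)⁻¹ ≤ ENNReal.ofReal (12 * Real.pi * r) := by
  rcases le_or_gt r 0 with hr | hr
  · rw [Metric.ball_eq_empty.2 hr]; simp
  by_cases hd : dist ζ c ≤ 2 * r
  · calc ∫⁻ z in Metric.ball c r, (‖z - ζ‖₊ : ℝ≥0∞)⁻¹
        ≤ ∫⁻ z in Metric.ball ζ (3 * r), (‖z - ζ‖₊ : ℝ≥0∞)⁻¹ := by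
          refine lintegral_mono_set fun z hz => ?_
          rw [Metric.mem_ball] at *
          calc dist z ζ ≤ dist z c + dist c ζ := dist_triangle _ _ _
            _ < r + 2 * r := by rw [dist_comm c ζ]; exact add_lt_add_of_lt_of_le hz hd
            _ = 3 * r := by ring
      _ ≤ ENNReal.ofReal (4 * Real.pi * (3 * r)) := lint_inv_ball_center ζ (3 * r)
      _ = ENNReal.ofReal (12 * Real.pi * r) := by congr 1; ring
  · push_neg at hd
    have hb : ∀ z ∈ Metric.ball c r, (‖z - ζ‖₊ : ℝ≥0∞)⁻¹ ≤ ENNReal.ofReal (1 / r) := by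
      intro z hz
      rw [Metric.mem_ball] at hz
      have h1 : r ≤ ‖z - ζ‖ := by
        have := dist_triangle ζ z c
        rw [← dist_eq_norm z ζ, dist_comm z ζ]
        linarith
      have : ENNReal.ofReal r ≤ (‖z - ζ‖₊ : ℝ≥0∞) := by
        rw [← enorm_eq_nnnorm, ← ofReal_norm]; exact ENNReal.ofReal_le_ofReal h1
      calc (‖z - ζ‖₊ : ℝ≥0∞)⁻¹ ≤ (ENNReal.ofReal r)⁻¹ := ENNReal.inv_le_inv' this
        _ = ENNReal.ofReal (1 / r) := by
          rw [one_div, ENNReal.ofReal_inv_of_pos hr]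
    calc ∫⁻ z in Metric.ball c r, (‖z - ζ‖₊ : ℝ≥0∞)⁻¹
        ≤ ∫⁻ _ in Metric.ball c r, ENNReal.ofReal (1 / r) :=
          setLIntegral_mono' measurableSet_ball hb
      _ = ENNReal.ofReal (1 / r) * volume (Metric.ball c r) := setLIntegral_const _ _
      _ = ENNReal.ofReal (1 / r) * ENNReal.ofReal (r ^ 2 * Real.pi) := by
          rw [vol_ball_C c r hr.le]
      _ = ENNReal.ofReal (1 / r * (r ^ 2 * Real.pi)) := by
          rw [← ENNReal.ofReal_mul (by positivity)]
      _ ≤ ENNReal.ofReal (12 * Real.pi * r) := by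
          refine ENNReal.ofReal_le_ofReal ?_
          rw [show 1 / r * (r ^ 2 * Real.pi) = Real.pi * r by field_simp]
          nlinarith [Real.pi_pos]

lemma lint_inv_ball_far (a ζ : ℂ) (ε d : ℝ) (hε : 0 < ε) (hd : 0 < d) (hεd : ε ≤ d / 2)
    (hζ : d ≤ dist ζ a) :
    ∫⁻ z in Metric.ball a ε, (‖z - ζ‖₊ : ℝ≥0∞)⁻¹
      ≤ ENNReal.ofReal (2 / d) * volume (Metric.ball a ε) := by
  have hb : ∀ z ∈ Metric.ball a ε, (‖z - ζ‖₊ : ℝ≥0∞)⁻¹ ≤ ENNReal.ofReal (2 / d) := by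
    intro z hz
    rw [Metric.mem_ball] at hz
    have h1 : d / 2 ≤ ‖z - ζ‖ := by
      have := dist_triangle ζ z a
      rw [← dist_eq_norm z ζ, dist_comm z ζ]
      linarith
    have : ENNReal.ofReal (d / 2) ≤ (‖z - ζ‖₊ : ℝ≥0∞) := by
      rw [← enorm_eq_nnnorm, ← ofReal_norm]; exact ENNReal.ofReal_le_ofReal h1
    calc (‖z - ζ‖₊ : ℝ≥0∞)⁻¹ ≤ (ENNReal.ofReal (d / 2))⁻¹ := ENNReal.inv_le_inv' this
      _ = ENNReal.ofReal ((d / 2)⁻¹) := (ENNReal.ofReal_inv_of_pos (by positivity)).symm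
      _ = ENNReal.ofReal (2 / d) := by rw [inv_div]
  calc ∫⁻ z in Metric.ball a ε, (‖z - ζ‖₊ : ℝ≥0∞)⁻¹
      ≤ ∫⁻ _ in Metric.ball a ε, ENNReal.ofReal (2 / d) :=
        setLIntegral_mono' measurableSet_ball hb
    _ = ENNReal.ofReal (2 / d) * volume (Metric.ball a ε) := setLIntegral_const _ _

lemma enn_inv_le(x : ℂ) : (‖x⁻¹‖₊ : ℝ≥0∞) ≤ (‖x‖₊ : ℝ≥0∞)⁻¹ := by
  rcases eq_or_ne x 0 with rfl | hx
  · simp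
  · rw [nnnorm_inv, ENNReal.coe_inv (nnnorm_ne_zero_iff.2 hx)]

/-- At a root `a` of `Q` of multiplicity exactly `k`, a measure whose Cauchy transform
satisfies `C(z)^k = V(z)/Q(z)` a.e. carries a positive point mass `m = μ({a})` with
`m^k = V(a)/W(a)` where `Q = (z-a)^k·W`; in particular `V(a)/W(a)` is a positive real
number and `μ({a}) = |V(a)/W(a)|^{1/k}`. -/
theorem stmt6 (V Q : Polynomial ℂ) (hV : V.Monic) (hQ : Q.Monic)
    (hcop : ∀ z : ℂ, ¬(V.eval z = 0 ∧ Q.eval z = 0))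
    (k : ℕ) (hk : 2 ≤ k) (hdeg : Q.natDegree = V.natDegree + k)
    (μ : Measure ℂ) (hp : IsProbabilityMeasure μ)
    (hc : ∃ K : Set ℂ, IsCompact K ∧ μ Kᶜ = 0)
    (h : ∀ᵐ z ∂(volume : Measure ℂ), (cauchyTransform μ z) ^ k = V.eval z / Q.eval z)
    (a : ℂ) (W : Polynomial ℂ) (hfac : Q = (X - Polynomial.C a) ^ k * W)
    (hWa : W.eval a ≠ 0) :
    0 < (μ {a}).toReal ∧
    (((μ {a}).toReal : ℂ)) ^ k = V.eval a / W.eval a ∧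
    (∃ t : ℝ, 0 < t ∧ V.eval a / W.eval a = (t : ℂ)) ∧
    (μ {a}).toReal = ‖V.eval a / W.eval a‖ ^ ((1 : ℝ) / k) := by
  have hk0 : k ≠ 0 := by omega
  set m : ℝ := (μ {a}).toReal with hm_def
  have hm0 : 0 ≤ m := ENNReal.toReal_nonneg
  set C : ℂ → ℂ := cauchyTransform μ with hC_def
  set ν : Measure ℂ := μ.restrict {a}ᶜ with hν_def
  set L : ℂ := V.eval a / W.eval a with hL_def
  have hQa : Q.eval a = 0 := by
    rw [hfac]
    simp [zero_pow hk0]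
  have hVa : V.eval a ≠ 0 := fun hva => hcop a ⟨hva, hQa⟩
  have hL0 : L ≠ 0 := div_ne_zero hVa hWa
  -- measurability of the Cauchy transform
  have hker : Measurable fun p : ℂ × ℂ => (p.1 - p.2)⁻¹ :=
    (measurable_fst.sub measurable_snd).inv
  have hCmeas : Measurable C := by
    have := (hker.stronglyMeasurable).integral_prod_right' (ν := μ)
    exact this.measurable
  -- the total mass lintegral
  set I : ℂ → ℝ≥0∞ := fun z => ∫⁻ ζ, (‖(z - ζ)⁻¹‖₊ : ℝ≥0∞) ∂μ with hI_def
  have hImeas : Measurable I := by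
    exact (hker.nnnorm.coe_nnreal_ennreal).lintegral_prod_right'
  have hswap : ∀ (ρ : Measure ℂ) (ε : ℝ), SFinite ρ →
      (∫⁻ z in Metric.ball a ε, ∫⁻ ζ, (‖z - ζ‖₊ : ℝ≥0∞)⁻¹ ∂ρ)
        = ∫⁻ ζ, (∫⁻ z in Metric.ball a ε, (‖z - ζ‖₊ : ℝ≥0∞)⁻¹) ∂ρ := by
    intro ρ ε hsf
    exact lintegral_lintegral_swap
      (((measurable_fst.sub measurable_snd).nnnorm.coe_nnreal_ennreal).inv.aemeasurable)
  have hIbound : ∀ ε : ℝ, (∫⁻ z in Metric.ball a ε, I z) ≤ ENNReal.ofReal (12 * Real.pi * ε) := by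
    intro ε
    calc (∫⁻ z in Metric.ball a ε, I z)
        ≤ ∫⁻ z in Metric.ball a ε, ∫⁻ ζ, (‖z - ζ‖₊ : ℝ≥0∞)⁻¹ ∂μ := by
          refine lintegral_mono fun z => lintegral_mono fun ζ => enn_inv_le _
      _ = ∫⁻ ζ, (∫⁻ z in Metric.ball a ε, (‖z - ζ‖₊ : ℝ≥0∞)⁻¹) ∂μ := hswap μ ε inferInstance
      _ ≤ ∫⁻ _, ENNReal.ofReal (12 * Real.pi * ε) ∂μ :=
          lintegral_mono fun ζ => lint_inv_ball a ζ ε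
      _ = ENNReal.ofReal (12 * Real.pi * ε) := by simp
  -- decomposition of the Cauchy transform
  set D : ℂ → ℂ := fun z => ∫ ζ, (z - ζ)⁻¹ ∂ν with hD_def
  have hdec : ∀ z : ℂ, I z ≠ ⊤ → C z = (m : ℂ) * (z - a)⁻¹ + D z := by
    intro z hz
    have hint : Integrable (fun ζ => (z - ζ)⁻¹) μ := by
      refine ⟨((measurable_const.sub measurable_id).inv).aestronglyMeasurable, ?_⟩
      exact lt_top_iff_ne_top.2 hz
    have h1 : C z = ∫ ζ, (z - ζ)⁻¹ ∂(μ.restrict {a}) + ∫ ζ, (z - ζ)⁻¹ ∂ν := by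
      rw [hC_def]
      show (∫ ζ, (z - ζ)⁻¹ ∂μ) = _
      conv_lhs => rw [← Measure.restrict_add_restrict_compl (μ := μ) (measurableSet_singleton a)]
      exact integral_add_measure hint.restrict hint.restrict
    rw [h1, Measure.restrict_singleton, integral_smul_measure, integral_dirac,
      Complex.real_smul]
  by_cases hmL : ((m : ℂ)) ^ k = L
  · -- conclusions from the key identity
    have habs : ‖L‖ = m ^ k := by
      rw [← hmL, norm_pow, Complex.norm_real, Real.norm_eq_abs, abs_of_nonneg hm0]
    have hmne : m ≠ 0 := by
      intro h0
      rw [h0] at hmL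
      simp [zero_pow hk0] at hmL
      exact hL0 hmL.symm
    have hmpos : 0 < m := lt_of_le_of_ne hm0 (Ne.symm hmne)
    refine ⟨hmpos, hmL, ⟨m ^ k, pow_pos hmpos k, by rw [← hmL]; push_cast; ring⟩, ?_⟩
    rw [habs, ← Real.rpow_natCast m k, ← Real.rpow_mul hm0, mul_one_div,
      div_self (by exact_mod_cast hk0 : (k : ℝ) ≠ 0), Real.rpow_one]
  · -- main contradiction argument
    exfalso
    set c : ℝ := dist ((m : ℂ) ^ k) L with hc_def
    have hcpos : 0 < c := dist_pos.2 hmL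
    -- continuity of x ↦ x^k at m
    obtain ⟨δ, hδpos, hδ⟩ := Metric.continuousAt_iff.1 ((continuous_pow k).continuousAt
      (x := ((m : ℝ) : ℂ))) (c / 3) (by positivity)
    -- continuity of V/W at a
    have hVWcont : ContinuousAt (fun z => V.eval z / W.eval z) a :=
      (V.continuous.continuousAt).div (W.continuous.continuousAt) hWa
    obtain ⟨ε1, hε1pos, hε1⟩ := Metric.continuousAt_iff.1 hVWcont (c / 3) (by positivity)
    obtain ⟨ε2, hε2pos, hε2⟩ := Metric.continuousAt_iff.1 (W.continuous.continuousAt (x := a))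
      ‖W.eval a‖ (norm_pos_iff.2 hWa)
    have hWz : ∀ z : ℂ, dist z a < ε2 → W.eval z ≠ 0 := by
      intro z hz h0
      have := hε2 hz
      rw [h0, dist_comm, dist_eq_norm, sub_zero] at this
      exact lt_irrefl _ this
    -- choose d with ν (ball a d) small
    have hνa : ν {a} = 0 := by
      rw [hν_def, Measure.restrict_apply (measurableSet_singleton a)]
      simp
    obtain ⟨d, hdpos, hdν⟩ : ∃ d : ℝ, 0 < d ∧ ν (Metric.ball a d) ≤ ENNReal.ofReal (δ / 48) := by
      have hiInter : (⋂ n : ℕ, Metric.ball a (1 / (n + 1) : ℝ)) = {a} := by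
        ext z
        simp only [Set.mem_iInter, Metric.mem_ball, Set.mem_singleton_iff]
        constructor
        · intro hz
          by_contra hza
          have hpos : 0 < dist z a := dist_pos.2 hza
          obtain ⟨n, hn⟩ := exists_nat_one_div_lt hpos
          exact absurd (hz n) (not_lt.2 hn.le)
        · intro hz n
          rw [hz, dist_self]
          positivity
      have htend : Filter.Tendsto (fun n : ℕ => ν (Metric.ball a (1 / (n + 1) : ℝ)))
          Filter.atTop (nhds 0) := by
        have := MeasureTheory.tendsto_measure_iInter_atTop (μ := ν)
          (s := fun n : ℕ => Metric.ball a (1 / (n + 1) : ℝ))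
          (fun n => measurableSet_ball.nullMeasurableSet)
          (fun i j hij => Metric.ball_subset_ball (by
            apply div_le_div_of_nonneg_left (by norm_num) (by positivity)
            exact_mod_cast add_le_add_left (Nat.cast_le.2 hij) 1))
          ⟨0, measure_ne_top ν _⟩
        rwa [hiInter, hνa] at this
      have hev := htend.eventually_le_const (by
        simp only [ENNReal.ofReal_pos]
        positivity : (0 : ℝ≥0∞) < ENNReal.ofReal (δ / 48))
      obtain ⟨n, hn⟩ := hev.exists
      exact ⟨1 / (n + 1 : ℝ), by positivity, hn⟩
    -- choose ε
    set ε : ℝ := min ε1 (min ε2 (min (d / 2) (δ * d / 8))) with hε_def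
    have hεpos : 0 < ε := by
      apply lt_min (by positivity)
      apply lt_min (by positivity)
      exact lt_min (by positivity) (by positivity)
    have hεε1 : ε ≤ ε1 := min_le_left _ _
    have hεε2 : ε ≤ ε2 := (min_le_right _ _).trans (min_le_left _ _)
    have hεd2 : ε ≤ d / 2 := (min_le_right _ _).trans ((min_le_right _ _).trans (min_le_left _ _))
    have hεδd : ε ≤ δ * d / 8 :=
      (min_le_right _ _).trans ((min_le_right _ _).trans (min_le_right _ _))
    set P : Measure ℂ := volume.restrict (Metric.ball a ε) with hP_def
    set F : ℂ → ℝ≥0∞ := fun z => (‖C z - (m : ℂ) * (z - a)⁻¹‖₊ : ℝ≥0∞) with hF_def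
    have hFmeas : Measurable F := by
      exact (hCmeas.sub ((measurable_const.mul
        ((measurable_id.sub measurable_const).inv)))).nnnorm.coe_nnreal_ennreal
    have hIae : ∀ᵐ z ∂P, I z < ⊤ :=
      ae_lt_top hImeas (((hIbound ε).trans_lt ENNReal.ofReal_lt_top).ne)
    -- the L¹ estimate on F
    have hE : (∫⁻ z, F z ∂P) ≤ ENNReal.ofReal (Real.pi * δ * ε / 2) := by
      have hEeq : (∫⁻ z, F z ∂P) = ∫⁻ z, (‖D z‖₊ : ℝ≥0∞) ∂P := by
        refine lintegral_congr_ae ?_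
        filter_upwards [hIae] with z hz
        rw [hF_def]
        simp only
        rw [hdec z hz.ne, add_sub_cancel_left]
      have hνuniv : ν Set.univ ≤ 1 := by
        rw [hν_def, Measure.restrict_apply_univ]
        exact (measure_mono (Set.subset_univ _)).trans_eq (measure_univ)
      have step : (∫⁻ z, F z ∂P)
          ≤ ENNReal.ofReal (12 * Real.pi * ε) * ENNReal.ofReal (δ / 48)
            + ENNReal.ofReal (2 / d) * volume (Metric.ball a ε) := by
        calc (∫⁻ z, F z ∂P) = ∫⁻ z, (‖D z‖₊ : ℝ≥0∞) ∂P := hEeq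
          _ ≤ ∫⁻ z, (∫⁻ ζ, (‖(z - ζ)⁻¹‖₊ : ℝ≥0∞) ∂ν) ∂P :=
              lintegral_mono fun z => enorm_integral_le_lintegral_enorm _
          _ ≤ ∫⁻ z, (∫⁻ ζ, (‖z - ζ‖₊ : ℝ≥0∞)⁻¹ ∂ν) ∂P :=
              lintegral_mono fun z => lintegral_mono fun ζ => enn_inv_le _
          _ = ∫⁻ ζ, (∫⁻ z in Metric.ball a ε, (‖z - ζ‖₊ : ℝ≥0∞)⁻¹) ∂ν :=
              hswap ν ε inferInstance
          _ = (∫⁻ ζ in Metric.ball a d, (∫⁻ z in Metric.ball a ε, (‖z - ζ‖₊ : ℝ≥0∞)⁻¹) ∂ν)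
              + ∫⁻ ζ in (Metric.ball a d)ᶜ,
                  (∫⁻ z in Metric.ball a ε, (‖z - ζ‖₊ : ℝ≥0∞)⁻¹) ∂ν :=
              (lintegral_add_compl _ measurableSet_ball).symm
          _ ≤ ENNReal.ofReal (12 * Real.pi * ε) * ENNReal.ofReal (δ / 48)
              + ENNReal.ofReal (2 / d) * volume (Metric.ball a ε) := by
              gcongr ?_ + ?_
              · calc (∫⁻ ζ in Metric.ball a d, (∫⁻ z in Metric.ball a ε, (‖z - ζ‖₊ : ℝ≥0∞)⁻¹) ∂ν)
                    ≤ ∫⁻ _ in Metric.ball a d, ENNReal.ofReal (12 * Real.pi * ε) ∂ν :=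
                      setLIntegral_mono' measurableSet_ball fun ζ _ => lint_inv_ball a ζ ε
                  _ = ENNReal.ofReal (12 * Real.pi * ε) * ν (Metric.ball a d) :=
                      setLIntegral_const _ _
                  _ ≤ ENNReal.ofReal (12 * Real.pi * ε) * ENNReal.ofReal (δ / 48) := by
                      gcongr
              · calc (∫⁻ ζ in (Metric.ball a d)ᶜ,
                      (∫⁻ z in Metric.ball a ε, (‖z - ζ‖₊ : ℝ≥0∞)⁻¹) ∂ν)
                    ≤ ∫⁻ _ in (Metric.ball a d)ᶜ,
                        ENNReal.ofReal (2 / d) * volume (Metric.ball a ε) ∂ν := by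
                      refine setLIntegral_mono' measurableSet_ball.compl fun ζ hζ => ?_
                      refine lint_inv_ball_far a ζ ε d hεpos hdpos hεd2 ?_
                      simpa [Metric.mem_ball, not_lt] using hζ
                  _ = ENNReal.ofReal (2 / d) * volume (Metric.ball a ε) * ν (Metric.ball a d)ᶜ :=
                      setLIntegral_const _ _
                  _ ≤ ENNReal.ofReal (2 / d) * volume (Metric.ball a ε) * 1 := by
                      gcongr
                      exact (measure_mono (Set.subset_univ _)).trans hνuniv
                  _ = ENNReal.ofReal (2 / d) * volume (Metric.ball a ε) := mul_one _
      refine step.trans ?_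
      rw [vol_ball_C a ε hεpos.le, ← ENNReal.ofReal_mul (by positivity),
        ← ENNReal.ofReal_mul (by positivity), ← ENNReal.ofReal_add (by positivity) (by positivity)]
      refine ENNReal.ofReal_le_ofReal ?_
      have h2 : 2 / d * (ε ^ 2 * Real.pi) ≤ Real.pi * δ * ε / 4 := by
        rw [div_mul_eq_mul_div, div_le_div_iff₀ hdpos (by norm_num)]
        have h8 : 8 * ε ≤ δ * d := by linarith
        nlinarith [mul_le_mul_of_nonneg_right h8 (mul_nonneg hεpos.le Real.pi_pos.le)]
      have h1 : 12 * Real.pi * ε * (δ / 48) = Real.pi * δ * ε / 4 := by ring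
      linarith
    -- Markov inequality
    set Sbad : Set ℂ := {z | ENNReal.ofReal (δ / ε) ≤ F z} with hSbad_def
    have hMarkov : P Sbad ≤ (∫⁻ z, F z ∂P) / ENNReal.ofReal (δ / ε) :=
      meas_ge_le_lintegral_div hFmeas.aemeasurable
        (by simp only [ne_eq, ENNReal.ofReal_eq_zero, not_le]; positivity)
        ENNReal.ofReal_ne_top
    have hSlt : P Sbad < volume (Metric.ball a ε) := by
      have h1 : (∫⁻ z, F z ∂P) / ENNReal.ofReal (δ / ε)
          ≤ ENNReal.ofReal (Real.pi * δ * ε / 2) / ENNReal.ofReal (δ / ε) :=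
        ENNReal.div_le_div_right hE _
      have h2 : ENNReal.ofReal (Real.pi * δ * ε / 2) / ENNReal.ofReal (δ / ε)
          = ENNReal.ofReal (ε ^ 2 * Real.pi / 2) := by
        rw [← ENNReal.ofReal_div_of_pos (by positivity)]
        congr 1
        field_simp
      refine (hMarkov.trans (h1.trans_eq h2)).trans_lt ?_
      rw [vol_ball_C a ε hεpos.le]
      rw [ENNReal.ofReal_lt_ofReal_iff (by positivity)]
      have : 0 < ε ^ 2 * Real.pi := by positivity
      linarith
    -- existence of a good point
    have hgood : ∃ z : ℂ, z ∈ Metric.ball a ε ∧ (C z) ^ k = V.eval z / Q.eval z ∧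
        I z < ⊤ ∧ z ≠ a ∧ F z < ENNReal.ofReal (δ / ε) := by
      by_contra hno
      push_neg at hno
      have hsub : Metric.ball a ε ⊆
          {z | ¬ (C z) ^ k = V.eval z / Q.eval z} ∪ ({z | ¬ I z < ⊤} ∪ ({a} ∪ Sbad)) := by
        intro z hz
        by_cases h1 : (C z) ^ k = V.eval z / Q.eval z
        · by_cases h2 : I z < ⊤
          · by_cases h3 : z = a
            · exact Or.inr (Or.inr (Or.inl h3))
            · exact Or.inr (Or.inr (Or.inr (hno z hz h1 h2 h3)))
          · exact Or.inr (Or.inl h2)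
        · exact Or.inl h1
      have hball : P (Metric.ball a ε) = volume (Metric.ball a ε) := by
        rw [hP_def, Measure.restrict_apply_self]
      have hPle : ∀ A : Set ℂ, P A ≤ volume A := by
        intro A
        rw [hP_def, Measure.restrict_apply' measurableSet_ball]
        exact measure_mono Set.inter_subset_left
      have hP1 : P {z | ¬ (C z) ^ k = V.eval z / Q.eval z} = 0 :=
        le_antisymm ((hPle _).trans_eq (ae_iff.1 h)) zero_le
      have hP2 : P {z | ¬ I z < ⊤} = 0 := ae_iff.1 hIae
      have hP3 : P ({a} : Set ℂ) = 0 :=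
        le_antisymm ((hPle _).trans_eq (measure_singleton a)) zero_le
      have hchain : volume (Metric.ball a ε) < volume (Metric.ball a ε) := by
        calc volume (Metric.ball a ε) = P (Metric.ball a ε) := hball.symm
          _ ≤ P ({z | ¬ (C z) ^ k = V.eval z / Q.eval z}
                ∪ ({z | ¬ I z < ⊤} ∪ ({a} ∪ Sbad))) := measure_mono hsub
          _ ≤ P {z | ¬ (C z) ^ k = V.eval z / Q.eval z}
                + (P {z | ¬ I z < ⊤} + (P ({a} : Set ℂ) + P Sbad)) := by
              refine (measure_union_le _ _).trans ?_
              gcongr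
              refine (measure_union_le _ _).trans ?_
              gcongr
              exact measure_union_le _ _
          _ = P Sbad := by rw [hP1, hP2, hP3]; simp
          _ < volume (Metric.ball a ε) := hSlt
      exact lt_irrefl _ hchain
    -- derive the contradiction at a good point
    obtain ⟨z, hzb, hz1, hz2, hz3, hz4⟩ := hgood
    have hdist : dist z a < ε := Metric.mem_ball.1 hzb
    have hza : z - a ≠ 0 := sub_ne_zero.2 hz3
    have hCz : C z = (m : ℂ) * (z - a)⁻¹ + D z := hdec z hz2.ne
    have hnorm : ‖C z - (m : ℂ) * (z - a)⁻¹‖ < δ / ε := by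
      have := hz4
      rw [hF_def] at this
      simp only at this
      rw [← enorm_eq_nnnorm, ← ofReal_norm] at this
      exact (ENNReal.ofReal_lt_ofReal_iff (by positivity)).1 this
    set u : ℂ := (z - a) * C z with hu_def
    have hum : dist u ((m : ℝ) : ℂ) < δ := by
      have hid : u - (m : ℂ) = (z - a) * (C z - (m : ℂ) * (z - a)⁻¹) := by
        field_simp
        rw [hu_def]
      rw [dist_eq_norm, hid, norm_mul]
      calc ‖z - a‖ * ‖C z - (m : ℂ) * (z - a)⁻¹‖ < ε * (δ / ε) := by
            refine mul_lt_mul'' ?_ hnorm (norm_nonneg _) (norm_nonneg _)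
            rw [← dist_eq_norm]
            exact hdist
        _ = δ := by field_simp
    have hQz : Q.eval z = (z - a) ^ k * W.eval z := by
      rw [hfac]
      simp
    have hWzz : W.eval z ≠ 0 := hWz z (hdist.trans_le hεε2)
    have huk : u ^ k = V.eval z / W.eval z := by
      rw [hu_def, mul_pow, hz1, hQz]
      field_simp
    have hd1 : dist (u ^ k) (((m : ℝ) : ℂ) ^ k) < c / 3 := hδ hum
    have hd2 : dist (u ^ k) L < c / 3 := by
      rw [huk, hL_def]
      exact hε1 (hdist.trans_le hεε1)
    have : c < c := by
      calc c = dist (((m : ℝ) : ℂ) ^ k) L := hc_def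
        _ ≤ dist (((m : ℝ) : ℂ) ^ k) (u ^ k) + dist (u ^ k) L := dist_triangle _ _ _
        _ < c / 3 + c / 3 := by
            rw [dist_comm]
            exact add_lt_add hd1 hd2
        _ < c := by linarith
    exact lt_irrefl _ this
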